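/- For a square-summable sequence φ: ℤ² → ℂ, we have ‖φ‖_{ℓ∞(ℤ²)} ≤ (κ/2^{p/2})^{1/4} · ‖∇_D φ‖_{ℓ²(ℤ²)}^{p/4} · ‖φ‖_{ℓ²(ℤ²)}^{1−p/4} with p = 2 and κ = 2² = 4; explicitly, ‖φ‖_{ℓ∞(ℤ²)}⁴ ≤ 2 · ‖∇_D φ‖_{ℓ²(ℤ²)}² · ‖φ‖_{ℓ²(ℤ²)}². -/

import Mathlib

noncomputable section

/-- Partial difference in the first coordinate on ℤ². -/
def D1 (φ : ℤ × ℤ → ℂ) : ℤ × ℤ → ℂ := fun p => φ (p.1 + 1, p.2) - φ p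

/-- Partial difference in the second coordinate on ℤ². -/
def D2 (φ : ℤ × ℤ → ℂ) : ℤ × ℤ → ℂ := fun p => φ (p.1, p.2 + 1) - φ p

/-- The ℓ²(ℤ²) norm. -/
def l2 (φ : ℤ × ℤ → ℂ) : ℝ := Real.sqrt (∑' p : ℤ × ℤ, ‖φ p‖ ^ 2)

/-- Shift equivalence in the first coordinate. -/
def shiftE1 : ℤ × ℤ ≃ ℤ × ℤ where
  toFun p := (p.1 + 1, p.2)
  invFun p := (p.1 - 1, p.2)
  left_inv p := by simp
  right_inv p := by simp

/-- Shift equivalence in the second coordinate. -/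
def shiftE2 : ℤ × ℤ ≃ ℤ × ℤ where
  toFun p := (p.1, p.2 + 1)
  invFun p := (p.1, p.2 - 1)
  left_inv p := by simp
  right_inv p := by simp

/-- 1D discrete telescoping bound. -/
lemma tele_aux (g : ℤ → ℝ) (hg : ∀ j, 0 ≤ g j) (hs : Summable g)
    (hd : Summable fun j => |g (j + 1) - g j|) (m : ℤ) :
    g m ≤ ∑' j : ℤ, |g (j + 1) - g j| := by
  by_contra hlt
  push_neg at hlt
  set S := ∑' j : ℤ, |g (j + 1) - g j| with hS
  set ε := g m - S with hε
  have hεpos : 0 < ε := by simp only [hε]; linarith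
  have hev : ∀ᶠ j in Filter.cofinite, g j < ε :=
    hs.tendsto_cofinite_zero.eventually (gt_mem_nhds hεpos)
  rw [Filter.eventually_cofinite] at hev
  -- find N > m with g N < ε
  obtain ⟨N, hNmem, hNg⟩ : ∃ N, m < N ∧ g N < ε := by
    by_contra hc
    push_neg at hc
    have hsub : Set.Ioi m ⊆ {j | ¬ g j < ε} := fun j hj => not_lt.2 (hc j hj)
    exact (Set.Ioi_infinite m) (hev.subset hsub)
  -- telescoping
  have key : ∀ k : ℕ, g m - g (m + k) ≤ ∑ i ∈ Finset.range k, |g (m + i + 1) - g (m + i)| := by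
    intro k
    induction k with
    | zero => simp
    | succ k ih =>
      rw [Finset.sum_range_succ]
      have h1 : g (m + k) - g (m + k + 1) ≤ |g (m + k + 1) - g (m + k)| := by
        rw [abs_sub_comm]; exact le_abs_self _
      have h2 : (m + ((k : ℤ) + 1)) = m + k + 1 := by ring
      push_cast
      rw [h2]
      linarith
  have hsumle : ∀ k : ℕ, ∑ i ∈ Finset.range k, |g (m + i + 1) - g (m + i)| ≤ S := by
    intro k
    have hinj : Function.Injective (fun i : ℕ => m + (i : ℤ)) := by
      intro a b hab
      simpa using hab
    have hdc : Summable fun i : ℕ => |g (m + i + 1) - g (m + i)| := hd.comp_injective hinj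
    calc ∑ i ∈ Finset.range k, |g (m + i + 1) - g (m + i)|
        ≤ ∑' i : ℕ, |g (m + i + 1) - g (m + i)| :=
          Summable.sum_le_tsum _ (fun _ _ => abs_nonneg _) hdc
      _ ≤ S := Summable.tsum_le_tsum_of_inj (fun i : ℕ => m + (i : ℤ)) hinj
          (fun c _ => abs_nonneg _) (fun i => le_rfl) hdc hd
  have hk := key (N - m).toNat
  have hNk : m + ((N - m).toNat : ℤ) = N := by
    rw [Int.toNat_of_nonneg (by linarith)]; ring
  rw [hNk] at hk
  have := hsumle (N - m).toNat
  simp only [hε] at hNg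
  linarith

/-- Cauchy–Schwarz for tsums of nonnegative reals. -/
lemma cs_aux {ι : Type*} (f g : ι → ℝ) (hf : ∀ i, 0 ≤ f i) (hg : ∀ i, 0 ≤ g i)
    (hf2 : Summable fun i => f i ^ 2) (hg2 : Summable fun i => g i ^ 2) :
    ∑' i, f i * g i ≤ Real.sqrt (∑' i, f i ^ 2) * Real.sqrt (∑' i, g i ^ 2) := by
  have hfg : Summable fun i => f i * g i := by
    apply Summable.of_nonneg_of_le (fun i => mul_nonneg (hf i) (hg i))
      (fun i => ?_) ((hf2.add hg2).div_const 2)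
    nlinarith [sq_nonneg (f i - g i)]
  refine Summable.tsum_le_of_sum_le hfg (fun s => ?_)
  have h1 : (∑ i ∈ s, f i * g i) ^ 2 ≤ (∑ i ∈ s, f i ^ 2) * ∑ i ∈ s, g i ^ 2 :=
    Finset.sum_mul_sq_le_sq_mul_sq s f g
  have h2 : ∑ i ∈ s, f i ^ 2 ≤ ∑' i, f i ^ 2 :=
    Summable.sum_le_tsum s (fun i _ => sq_nonneg _) hf2
  have h3 : ∑ i ∈ s, g i ^ 2 ≤ ∑' i, g i ^ 2 :=
    Summable.sum_le_tsum s (fun i _ => sq_nonneg _) hg2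
  have h4 : (0:ℝ) ≤ ∑ i ∈ s, f i * g i :=
    Finset.sum_nonneg (fun i _ => mul_nonneg (hf i) (hg i))
  have h5 : (0:ℝ) ≤ ∑ i ∈ s, g i ^ 2 := Finset.sum_nonneg (fun i _ => sq_nonneg _)
  have h6 : (0:ℝ) ≤ ∑' i, f i ^ 2 := tsum_nonneg (fun i => sq_nonneg _)
  have h7 : (0:ℝ) ≤ ∑' i, g i ^ 2 := tsum_nonneg (fun i => sq_nonneg _)
  calc ∑ i ∈ s, f i * g i = Real.sqrt ((∑ i ∈ s, f i * g i) ^ 2) := (Real.sqrt_sq h4).symm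
    _ ≤ Real.sqrt ((∑' i, f i ^ 2) * (∑' i, g i ^ 2)) := by
        apply Real.sqrt_le_sqrt
        calc (∑ i ∈ s, f i * g i) ^ 2 ≤ (∑ i ∈ s, f i ^ 2) * ∑ i ∈ s, g i ^ 2 := h1
          _ ≤ (∑' i, f i ^ 2) * (∑' i, g i ^ 2) :=
            mul_le_mul h2 h3 h5 h6
    _ = Real.sqrt (∑' i, f i ^ 2) * Real.sqrt (∑' i, g i ^ 2) := Real.sqrt_mul h6 _

/-- A sum over an injectively embedded fiber is at most the full sum. -/
lemma fiber_le_aux {F : ℤ × ℤ → ℝ} (hF : Summable F) (h0 : ∀ q, 0 ≤ F q)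
    {i : ℤ → ℤ × ℤ} (hi : Function.Injective i) :
    ∑' j : ℤ, F (i j) ≤ ∑' q, F q :=
  Summable.tsum_le_tsum_of_inj i hi (fun c _ => h0 c) (fun j => le_rfl) (hF.comp_injective hi) hF

set_option maxHeartbeats 2000000 in
/-- Agmon–Kolmogorov inequality on ℤ² with p = 2, explicit form. -/
theorem agmon_kolmogorov_2d_p2 (φ : ℤ × ℤ → ℂ) (h : Summable fun p : ℤ × ℤ => ‖φ p‖ ^ 2) :
    (⨆ p : ℤ × ℤ, ‖φ p‖) ^ 4 ≤
      2 * (l2 (D1 φ) ^ 2 + l2 (D2 φ) ^ 2) * l2 φ ^ 2 := by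
  have hψ : Summable fun p : ℤ × ℤ => ‖φ p‖ ^ 2 := h
  -- shifted summability
  have hs1 : Summable fun p : ℤ × ℤ => ‖φ (p.1 + 1, p.2)‖ ^ 2 :=
    (shiftE1.summable_iff (f := fun p : ℤ × ℤ => ‖φ p‖ ^ 2)).2 h
  have hs2 : Summable fun p : ℤ × ℤ => ‖φ (p.1, p.2 + 1)‖ ^ 2 :=
    (shiftE2.summable_iff (f := fun p : ℤ × ℤ => ‖φ p‖ ^ 2)).2 h
  -- the difference operators are square-summable
  have hD1 : Summable fun p => ‖D1 φ p‖ ^ 2 := by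
    apply Summable.of_nonneg_of_le (fun p => sq_nonneg _) (fun p => ?_)
      ((hs1.mul_left 2).add (h.mul_left 2))
    have h1 := norm_sub_le (φ (p.1 + 1, p.2)) (φ p)
    have h2 := norm_nonneg (D1 φ p)
    have h3 := norm_nonneg (φ (p.1 + 1, p.2))
    have h4 := norm_nonneg (φ p)
    show ‖D1 φ p‖ ^ 2 ≤ 2 * ‖φ (p.1 + 1, p.2)‖ ^ 2 + 2 * ‖φ p‖ ^ 2
    unfold D1 at *
    have h5 := pow_le_pow_left₀ h2 h1 2
    nlinarith [sq_nonneg (‖φ (p.1 + 1, p.2)‖ - ‖φ p‖)]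
  have hD2 : Summable fun p => ‖D2 φ p‖ ^ 2 := by
    apply Summable.of_nonneg_of_le (fun p => sq_nonneg _) (fun p => ?_)
      ((hs2.mul_left 2).add (h.mul_left 2))
    have h1 := norm_sub_le (φ (p.1, p.2 + 1)) (φ p)
    have h2 := norm_nonneg (D2 φ p)
    have h3 := norm_nonneg (φ (p.1, p.2 + 1))
    have h4 := norm_nonneg (φ p)
    show ‖D2 φ p‖ ^ 2 ≤ 2 * ‖φ (p.1, p.2 + 1)‖ ^ 2 + 2 * ‖φ p‖ ^ 2
    unfold D2 at *
    have h5 := pow_le_pow_left₀ h2 h1 2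
    nlinarith [sq_nonneg (‖φ (p.1, p.2 + 1)‖ - ‖φ p‖)]
  -- absolute differences of ψ = ‖φ‖² are summable
  have hd1 : Summable fun q : ℤ × ℤ => |‖φ (q.1 + 1, q.2)‖ ^ 2 - ‖φ q‖ ^ 2| := by
    apply Summable.of_nonneg_of_le (fun q => abs_nonneg _) (fun q => ?_) (hs1.add h)
    exact (abs_sub _ _).trans (by
      rw [abs_of_nonneg (sq_nonneg _), abs_of_nonneg (sq_nonneg _)])
  have hd2 : Summable fun q : ℤ × ℤ => |‖φ (q.1, q.2 + 1)‖ ^ 2 - ‖φ q‖ ^ 2| := by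
    apply Summable.of_nonneg_of_le (fun q => abs_nonneg _) (fun q => ?_) (hs2.add h)
    exact (abs_sub _ _).trans (by
      rw [abs_of_nonneg (sq_nonneg _), abs_of_nonneg (sq_nonneg _)])
  set S1 := ∑' q : ℤ × ℤ, |‖φ (q.1 + 1, q.2)‖ ^ 2 - ‖φ q‖ ^ 2| with hS1def
  set S2 := ∑' q : ℤ × ℤ, |‖φ (q.1, q.2 + 1)‖ ^ 2 - ‖φ q‖ ^ 2| with hS2def
  have hS1nn : 0 ≤ S1 := tsum_nonneg (fun q => abs_nonneg _)
  have hS2nn : 0 ≤ S2 := tsum_nonneg (fun q => abs_nonneg _)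
  -- pointwise bound: ψ p ≤ S1 and ψ p ≤ S2
  have hpt1 : ∀ p : ℤ × ℤ, ‖φ p‖ ^ 2 ≤ S1 := by
    intro p
    have hinj : Function.Injective (fun j : ℤ => ((j, p.2) : ℤ × ℤ)) := by
      intro a b hab; simpa using hab
    have hg : Summable (fun j : ℤ => ‖φ (j, p.2)‖ ^ 2) := by
      simpa [Function.comp_def] using hψ.comp_injective hinj
    have hgd : Summable (fun j : ℤ => |‖φ (j + 1, p.2)‖ ^ 2 - ‖φ (j, p.2)‖ ^ 2|) := by
      simpa [Function.comp_def] using hd1.comp_injective hinj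
    have hrow : ‖φ p‖ ^ 2 ≤ ∑' j : ℤ, |‖φ (j + 1, p.2)‖ ^ 2 - ‖φ (j, p.2)‖ ^ 2| :=
      tele_aux (fun j => ‖φ (j, p.2)‖ ^ 2) (fun j => sq_nonneg _) hg hgd p.1
    have hfib : (∑' j : ℤ, |‖φ (j + 1, p.2)‖ ^ 2 - ‖φ (j, p.2)‖ ^ 2|) ≤ S1 := by
      simpa using fiber_le_aux hd1 (fun q => abs_nonneg _) hinj
    exact hrow.trans hfib
  have hpt2 : ∀ p : ℤ × ℤ, ‖φ p‖ ^ 2 ≤ S2 := by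
    intro p
    have hinj : Function.Injective (fun j : ℤ => ((p.1, j) : ℤ × ℤ)) := by
      intro a b hab; simpa using hab
    have hg : Summable (fun j : ℤ => ‖φ (p.1, j)‖ ^ 2) := by
      simpa [Function.comp_def] using hψ.comp_injective hinj
    have hgd : Summable (fun j : ℤ => |‖φ (p.1, j + 1)‖ ^ 2 - ‖φ (p.1, j)‖ ^ 2|) := by
      simpa [Function.comp_def] using hd2.comp_injective hinj
    have hcol : ‖φ p‖ ^ 2 ≤ ∑' j : ℤ, |‖φ (p.1, j + 1)‖ ^ 2 - ‖φ (p.1, j)‖ ^ 2| :=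
      tele_aux (fun j => ‖φ (p.1, j)‖ ^ 2) (fun j => sq_nonneg _) hg hgd p.2
    have hfib : (∑' j : ℤ, |‖φ (p.1, j + 1)‖ ^ 2 - ‖φ (p.1, j)‖ ^ 2|) ≤ S2 := by
      simpa using fiber_le_aux hd2 (fun q => abs_nonneg _) hinj
    exact hcol.trans hfib
  -- Cauchy–Schwarz bounds for S1, S2
  have hshift1 : ∑' q : ℤ × ℤ, ‖φ (q.1 + 1, q.2)‖ ^ 2 = ∑' q : ℤ × ℤ, ‖φ q‖ ^ 2 :=
    shiftE1.tsum_eq (fun p : ℤ × ℤ => ‖φ p‖ ^ 2)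
  have hshift2 : ∑' q : ℤ × ℤ, ‖φ (q.1, q.2 + 1)‖ ^ 2 = ∑' q : ℤ × ℤ, ‖φ q‖ ^ 2 :=
    shiftE2.tsum_eq (fun p : ℤ × ℤ => ‖φ p‖ ^ 2)
  set c := l2 φ with hcdef
  set a := l2 (D1 φ) with hadef
  set b := l2 (D2 φ) with hbdef
  have hc0 : 0 ≤ c := Real.sqrt_nonneg _
  have ha0 : 0 ≤ a := Real.sqrt_nonneg _
  have hb0 : 0 ≤ b := Real.sqrt_nonneg _
  have hb1 : S1 ≤ 2 * c * a := by
    have hA := cs_aux (fun q : ℤ × ℤ => ‖φ (q.1 + 1, q.2)‖) (fun q => ‖D1 φ q‖)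
      (fun q => norm_nonneg _) (fun q => norm_nonneg _) hs1 hD1
    have hB := cs_aux (fun q : ℤ × ℤ => ‖φ q‖) (fun q => ‖D1 φ q‖)
      (fun q => norm_nonneg _) (fun q => norm_nonneg _) hψ hD1
    rw [hshift1] at hA
    have hmul1 : Summable fun q : ℤ × ℤ => ‖φ (q.1 + 1, q.2)‖ * ‖D1 φ q‖ := by
      apply Summable.of_nonneg_of_le (fun q => mul_nonneg (norm_nonneg _) (norm_nonneg _))
        (fun q => ?_) ((hs1.add hD1).div_const 2)
      nlinarith [sq_nonneg (‖φ (q.1 + 1, q.2)‖ - ‖D1 φ q‖)]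
    have hmul2 : Summable fun q : ℤ × ℤ => ‖φ q‖ * ‖D1 φ q‖ := by
      apply Summable.of_nonneg_of_le (fun q => mul_nonneg (norm_nonneg _) (norm_nonneg _))
        (fun q => ?_) ((hψ.add hD1).div_const 2)
      nlinarith [sq_nonneg (‖φ q‖ - ‖D1 φ q‖)]
    have hptw : ∀ q : ℤ × ℤ, |‖φ (q.1 + 1, q.2)‖ ^ 2 - ‖φ q‖ ^ 2| ≤
        ‖φ (q.1 + 1, q.2)‖ * ‖D1 φ q‖ + ‖φ q‖ * ‖D1 φ q‖ := by
      intro q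
      have hxy := abs_norm_sub_norm_le (φ (q.1 + 1, q.2)) (φ q)
      rw [abs_le] at hxy
      have hx := norm_nonneg (φ (q.1 + 1, q.2))
      have hy := norm_nonneg (φ q)
      have hDeq : ‖φ (q.1 + 1, q.2) - φ q‖ = ‖D1 φ q‖ := rfl
      rw [hDeq] at hxy
      rw [abs_le]
      constructor <;> nlinarith [hxy.1, hxy.2]
    calc S1 ≤ ∑' q : ℤ × ℤ, (‖φ (q.1 + 1, q.2)‖ * ‖D1 φ q‖ + ‖φ q‖ * ‖D1 φ q‖) :=
          Summable.tsum_le_tsum hptw hd1 (hmul1.add hmul2)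
      _ = (∑' q : ℤ × ℤ, ‖φ (q.1 + 1, q.2)‖ * ‖D1 φ q‖) +
          ∑' q : ℤ × ℤ, ‖φ q‖ * ‖D1 φ q‖ := Summable.tsum_add hmul1 hmul2
      _ ≤ c * a + c * a := add_le_add hA hB
      _ = 2 * c * a := by ring
  have hb2 : S2 ≤ 2 * c * b := by
    have hA := cs_aux (fun q : ℤ × ℤ => ‖φ (q.1, q.2 + 1)‖) (fun q => ‖D2 φ q‖)
      (fun q => norm_nonneg _) (fun q => norm_nonneg _) hs2 hD2
    have hB := cs_aux (fun q : ℤ × ℤ => ‖φ q‖) (fun q => ‖D2 φ q‖)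
      (fun q => norm_nonneg _) (fun q => norm_nonneg _) hψ hD2
    rw [hshift2] at hA
    have hmul1 : Summable fun q : ℤ × ℤ => ‖φ (q.1, q.2 + 1)‖ * ‖D2 φ q‖ := by
      apply Summable.of_nonneg_of_le (fun q => mul_nonneg (norm_nonneg _) (norm_nonneg _))
        (fun q => ?_) ((hs2.add hD2).div_const 2)
      nlinarith [sq_nonneg (‖φ (q.1, q.2 + 1)‖ - ‖D2 φ q‖)]
    have hmul2 : Summable fun q : ℤ × ℤ => ‖φ q‖ * ‖D2 φ q‖ := by
      apply Summable.of_nonneg_of_le (fun q => mul_nonneg (norm_nonneg _) (norm_nonneg _))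
        (fun q => ?_) ((hψ.add hD2).div_const 2)
      nlinarith [sq_nonneg (‖φ q‖ - ‖D2 φ q‖)]
    have hptw : ∀ q : ℤ × ℤ, |‖φ (q.1, q.2 + 1)‖ ^ 2 - ‖φ q‖ ^ 2| ≤
        ‖φ (q.1, q.2 + 1)‖ * ‖D2 φ q‖ + ‖φ q‖ * ‖D2 φ q‖ := by
      intro q
      have hxy := abs_norm_sub_norm_le (φ (q.1, q.2 + 1)) (φ q)
      rw [abs_le] at hxy
      have hx := norm_nonneg (φ (q.1, q.2 + 1))
      have hy := norm_nonneg (φ q)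
      have hDeq : ‖φ (q.1, q.2 + 1) - φ q‖ = ‖D2 φ q‖ := rfl
      rw [hDeq] at hxy
      rw [abs_le]
      constructor <;> nlinarith [hxy.1, hxy.2]
    calc S2 ≤ ∑' q : ℤ × ℤ, (‖φ (q.1, q.2 + 1)‖ * ‖D2 φ q‖ + ‖φ q‖ * ‖D2 φ q‖) :=
          Summable.tsum_le_tsum hptw hd2 (hmul1.add hmul2)
      _ = (∑' q : ℤ × ℤ, ‖φ (q.1, q.2 + 1)‖ * ‖D2 φ q‖) +
          ∑' q : ℤ × ℤ, ‖φ q‖ * ‖D2 φ q‖ := Summable.tsum_add hmul1 hmul2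
      _ ≤ c * b + c * b := add_le_add hA hB
      _ = 2 * c * b := by ring
  -- sup bounds
  set M := ⨆ p : ℤ × ℤ, ‖φ p‖ with hMdef
  have hM0 : 0 ≤ M := Real.iSup_nonneg (fun p => norm_nonneg _)
  have hM1 : M ≤ Real.sqrt S1 := by
    apply ciSup_le
    intro p
    rw [show ‖φ p‖ = Real.sqrt (‖φ p‖ ^ 2) from (Real.sqrt_sq (norm_nonneg _)).symm]
    exact Real.sqrt_le_sqrt (hpt1 p)
  have hM2 : M ≤ Real.sqrt S2 := by
    apply ciSup_le
    intro p
    rw [show ‖φ p‖ = Real.sqrt (‖φ p‖ ^ 2) from (Real.sqrt_sq (norm_nonneg _)).symm]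
    exact Real.sqrt_le_sqrt (hpt2 p)
  have hMsq : M ^ 2 ≤ Real.sqrt S1 * Real.sqrt S2 := by
    rw [sq]
    exact mul_le_mul hM1 hM2 hM0 (Real.sqrt_nonneg _)
  have hM4 : M ^ 4 ≤ S1 * S2 := by
    have := pow_le_pow_left₀ (sq_nonneg M) hMsq 2
    rwa [← pow_mul, mul_pow, Real.sq_sqrt hS1nn, Real.sq_sqrt hS2nn] at this
  have hS12 : S1 * S2 ≤ (2 * c * a) * (2 * c * b) :=
    mul_le_mul hb1 hb2 hS2nn (by positivity)
  calc M ^ 4 ≤ S1 * S2 := hM4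
    _ ≤ (2 * c * a) * (2 * c * b) := hS12
    _ ≤ 2 * (a ^ 2 + b ^ 2) * c ^ 2 := by nlinarith [sq_nonneg (a - b), sq_nonneg c, mul_nonneg (mul_nonneg hc0 hc0) (mul_nonneg ha0 hb0)]
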